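/- arXiv:1103.4157 — 4 statements merged into one kernel-verified Lean document; each statement's English description precedes it below -/
import Mathlib

section
/- Let G be a countable group acting measurably on a measure space (X, μ) by measure-preserving maps, and let F ⊆ X be a measurable fundamental domain for the action. If C ⊆ X is a measurable set and m is a natural number such that μ(C) > m · μ(F), then there exists a point x ∈ F and m pairwise distinct group elements g₁, ..., g_m ∈ G such that gᵢ • x ∈ C for every i ∈ {1, ..., m}. -/
open MeasureTheory
open scoped ENNReal Pointwise

/-- If a set has `encard` at least `m`, there are `m` distinct elements in it. -/
lemma exists_inj_of_le_encard {G : Type*} {S : Set G} {m : ℕ}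
    (h : (m : ℕ∞) ≤ S.encard) :
    ∃ f : Fin m → G, Function.Injective f ∧ ∀ i, f i ∈ S := by
  obtain ⟨t, hts, ht⟩ := Set.exists_subset_encard_eq h
  have hfin : t.Finite := Set.finite_of_encard_eq_coe ht
  haveI := hfin.fintype
  have hcard : Fintype.card t = m := by
    have := (Set.encard_eq_coe_toFinset_card t).symm.trans ht
    rw [Set.toFinset_card] at this
    exact_mod_cast this
  let e := Fintype.equivFinOfCardEq hcard
  refine ⟨fun i => (e.symm i : G), ?_, fun i => hts (e.symm i).2⟩
  intro i j hij
  have : (e.symm i : t) = e.symm j := Subtype.ext hij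
  simpa using e.symm.injective this

/-- **Pigeonhole core of Blichfeldt's theorem for group actions.**
If `G` is a countable group acting measurably on a measure space `(X, μ)` by
measure-preserving maps, `F` is a measurable fundamental domain, `C` is measurable and
`μ C > m * μ F`, then some point `x ∈ F` admits `m` pairwise distinct group elements
sending it into `C`. -/
theorem blichfeldt_pigeonhole {X : Type*} [MeasurableSpace X]
    {G : Type*} [Group G] [Countable G] [MulAction G X]
    (μ : Measure X)
    (hmeas : ∀ g : G, Measurable fun x : X => g • x)
    [SMulInvariantMeasure G X μ]
    {F C : Set X} (hFmeas : MeasurableSet F)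
    (hF : IsFundamentalDomain G F μ) (hC : MeasurableSet C)
    (m : ℕ) (hm : (m : ℝ≥0∞) * μ F < μ C) :
    ∃ x ∈ F, ∃ g : Fin m → G, Function.Injective g ∧ ∀ i, g i • x ∈ C := by
  classical
  letI : MeasurableSpace G := ⊤
  haveI : MeasurableSMul G X :=
    { measurable_const_smul := hmeas
      measurable_smul_const := fun _ => measurable_from_top }
  by_contra hcon
  push_neg at hcon
  -- For every `x ∈ F`, the set of `g` with `x ∈ g • C` has fewer than `m` elements.
  have key : ∀ x ∈ F, ({g : G | x ∈ g • C}).encard < (m : ℕ∞) := by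
    intro x hx
    by_contra hK
    push_neg at hK
    obtain ⟨f, hfi, hfS⟩ := exists_inj_of_le_encard hK
    obtain ⟨i, hi⟩ := hcon x hx (fun i => (f i)⁻¹) fun a b h => hfi (inv_injective h)
    exact hi (by simpa [Set.mem_smul_set_iff_inv_smul_mem] using hfS i)
  -- translates of `C` are measurable
  have hmeasC : ∀ g : G, MeasurableSet (g • C) := by
    intro g
    have h1 : g • C = (fun x : X => g⁻¹ • x) ⁻¹' C := by
      rw [Set.preimage_smul, inv_inv]
    rw [h1]
    exact hmeas g⁻¹ hC
  -- rewrite `μ C` as an integral of a counting function over `F`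
  have hsum : μ C = ∫⁻ x, ∑' g : G, (g • C).indicator 1 x ∂(μ.restrict F) := by
    rw [hF.measure_eq_tsum C,
      lintegral_tsum fun g => ((measurable_one.indicator (hmeasC g)).aemeasurable)]
    refine tsum_congr fun g => ?_
    rw [lintegral_indicator_one (hmeasC g), Measure.restrict_apply (hmeasC g)]
  -- identify the counting function with the `encard`
  have hcount : ∀ x : X, ∑' g : G, (g • C).indicator 1 x
      = (({g : G | x ∈ g • C}).encard : ℝ≥0∞) := by
    intro x
    rw [← ENNReal.tsum_set_one,
      tsum_subtype {g : G | x ∈ g • C} fun _ => (1 : ℝ≥0∞)]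
    refine tsum_congr fun g => ?_
    by_cases h : x ∈ g • C <;>
      simp [Set.indicator_apply, Set.mem_setOf_eq, h]
  rcases Nat.eq_zero_or_pos m with rfl | hpos
  · -- `m = 0`: every point of `F` gives an immediate contradiction, so `F = ∅`
    have hFe : F = ∅ := by
      refine Set.eq_empty_iff_forall_notMem.2 fun x hx => ?_
      obtain ⟨i, _⟩ := hcon x hx (fun i => 1) (Function.injective_of_subsingleton _)
      exact i.elim0
    have : μ C = 0 := by
      rw [hF.measure_eq_tsum C]
      simp [hFe]
    simp [this] at hm
  · -- `m ≥ 1`: the counting function is bounded by `m - 1` on `F`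
    obtain ⟨k, rfl⟩ : ∃ k, m = k + 1 := ⟨m - 1, (Nat.succ_pred_eq_of_pos hpos).symm⟩
    have hbound : ∀ x ∈ F, ∑' g : G, (g • C).indicator 1 x ≤ (k : ℝ≥0∞) := by
      intro x hx
      rw [hcount x]
      have h1 : ({g : G | x ∈ g • C}).encard ≤ (k : ℕ∞) := by
        have := key x hx
        exact Order.le_of_lt_add_one (by exact_mod_cast this)
      calc (({g : G | x ∈ g • C}).encard : ℝ≥0∞) ≤ ((k : ℕ∞) : ℝ≥0∞) :=
            ENat.toENNReal_le.2 h1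
        _ = (k : ℝ≥0∞) := by simp
    have hle : μ C ≤ (k : ℝ≥0∞) * μ F := by
      rw [hsum]
      calc ∫⁻ x, ∑' g : G, (g • C).indicator 1 x ∂(μ.restrict F)
          ≤ ∫⁻ _, (k : ℝ≥0∞) ∂(μ.restrict F) := by
            refine lintegral_mono_ae ((ae_restrict_iff' hFmeas).2 (ae_of_all _ ?_))
            exact hbound
        _ = (k : ℝ≥0∞) * μ F := by
            rw [lintegral_const, Measure.restrict_apply_univ]
    have : μ C ≤ ((k + 1 : ℕ) : ℝ≥0∞) * μ F :=
      hle.trans (mul_le_mul_left (by exact_mod_cast Nat.cast_le.2 (Nat.le_succ k)) _)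
    exact absurd hm (not_lt.2 this)
end

section
/- Let G be a countable group acting measurably and freely on a measure space (X, μ) by measure-preserving maps, and let F ⊆ X be a measurable fundamental domain for the action. If C ⊆ X is a measurable set and m is a natural number with μ(C) > m · μ(F), then there exist m pairwise distinct points x₁, ..., x_m ∈ C that all lie in a single G-orbit. -/
open MeasureTheory
open scoped ENNReal Pointwise

/-- **Blichfeldt's theorem for free actions: distinct points in one orbit.**
If a countable group `G` acts measurably, freely, and measure-preservingly on `(X, μ)`
with measurable fundamental domain `F`, and `C` is a measurable set with
`μ C > m * μ F`, then there are `m` pairwise distinct points of `C` lying in a single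
`G`-orbit. -/
theorem blichfeldt_free_action {X : Type*} [MeasurableSpace X]
    {G : Type*} [Group G] [Countable G] [MulAction G X]
    (μ : Measure X)
    (hmeas : ∀ g : G, Measurable fun x : X => g • x)
    [SMulInvariantMeasure G X μ]
    (hfree : ∀ (g : G) (x : X), g • x = x → g = 1)
    {F C : Set X} (hFmeas : MeasurableSet F)
    (hF : IsFundamentalDomain G F μ) (hC : MeasurableSet C)
    (m : ℕ) (hm : (m : ℝ≥0∞) * μ F < μ C) :
    ∃ x : Fin m → X, Function.Injective x ∧ (∀ i, x i ∈ C) ∧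
      ∃ y : X, ∀ i, x i ∈ MulAction.orbit G y := by
  by_contra h
  push_neg at h
  -- Key combinatorial claim: for each `x`, at most `m` group elements `g` satisfy `x ∈ g • C`.
  have key : ∀ x : X, ∀ t : Finset G, (∀ g ∈ t, x ∈ g • C) → t.card ≤ m := by
    intro x t ht
    by_contra hcard
    push_neg at hcard
    obtain ⟨s, hst, hs⟩ := Finset.exists_subset_card_eq hcard.le
    have e : Fin m ≃ s := (Fintype.equivFinOfCardEq (by simp [hs])).symm
    set pts : Fin m → X := fun i => ((e i : G))⁻¹ • x with hpts
    have hinj : Function.Injective pts := by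
      intro i j hij
      have h1 : ((e j : G) * (e i : G)⁻¹) • x = x := by
        have := congrArg (fun z => (e j : G) • z) hij
        simp only [hpts, smul_smul] at this
        rw [this, mul_inv_cancel, one_smul]
      have h2 : (e j : G) = (e i : G) := by
        have := hfree _ _ h1
        rwa [mul_inv_eq_one] at this
      exact e.injective (Subtype.ext h2.symm)
    have hmem : ∀ i, pts i ∈ C := by
      intro i
      have : x ∈ (e i : G) • C := ht _ (hst (e i).2)
      rwa [Set.mem_smul_set_iff_inv_smul_mem] at this
    obtain ⟨i, hi⟩ := h pts hinj hmem x
    exact hi ⟨(e i : G)⁻¹, rfl⟩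
  have hmeasGC : ∀ g : G, MeasurableSet (g • C : Set X) := by
    intro g
    have : (fun x : X => g⁻¹ • x) ⁻¹' C = g • C := by
      rw [Set.preimage_smul, inv_inv]
    rw [← this]
    exact (hmeas g⁻¹) hC
  -- pointwise bound on the counting function
  have hpt : ∀ x : X, ∑' g : G, (g • C : Set X).indicator (1 : X → ℝ≥0∞) x ≤ (m : ℝ≥0∞) := by
    intro x
    set S : Set G := {g : G | x ∈ g • C} with hS
    have hSfin : S.Finite := by
      by_contra hinf
      obtain ⟨t, hts, htc⟩ := Set.Infinite.exists_subset_card_eq hinf (m + 1)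
      have := key x t fun g hg => hts hg
      omega
    calc ∑' g : G, (g • C : Set X).indicator (1 : X → ℝ≥0∞) x
        = ∑ g ∈ hSfin.toFinset, (g • C : Set X).indicator (1 : X → ℝ≥0∞) x := by
          refine tsum_eq_sum ?_
          intro g hg
          have : x ∉ g • C := by simpa [hS] using (fun hx => hg (hSfin.mem_toFinset.mpr hx))
          simp [Set.indicator_of_notMem this]
      _ ≤ ∑ g ∈ hSfin.toFinset, 1 := by
          refine Finset.sum_le_sum ?_
          intro g _
          exact Set.indicator_le_self _ _ _
      _ = (hSfin.toFinset.card : ℝ≥0∞) := by simp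
      _ ≤ (m : ℝ≥0∞) := by
          exact_mod_cast key x hSfin.toFinset fun g hg => hSfin.mem_toFinset.mp hg
  letI : MeasurableSpace G := ⊤
  haveI : MeasurableSMul G X := by
    haveI : MeasurableConstSMul G X := ⟨fun c => hmeas c⟩
    exact ⟨fun _ => measurable_from_top⟩
  have hle : μ C ≤ (m : ℝ≥0∞) * μ F := by
    calc μ C = ∑' g : G, μ (g • C ∩ F) := hF.measure_eq_tsum C
      _ = ∑' g : G, ∫⁻ x in F, (g • C : Set X).indicator (1 : X → ℝ≥0∞) x ∂μ := by
          refine tsum_congr fun g => ?_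
          rw [lintegral_indicator_one (hmeasGC g), Measure.restrict_apply (hmeasGC g)]
      _ = ∫⁻ x in F, ∑' g : G, (g • C : Set X).indicator (1 : X → ℝ≥0∞) x ∂μ :=
          (lintegral_tsum fun g => (measurable_const.indicator (hmeasGC g)).aemeasurable).symm
      _ ≤ ∫⁻ _ in F, (m : ℝ≥0∞) ∂μ := lintegral_mono fun x => hpt x
      _ = (m : ℝ≥0∞) * μ F := by simp [Measure.restrict_apply]
  exact hm.not_ge hle
end

section
/- Let K be a metric space equipped with a Borel measure μ, let G be a countable group acting on K by isometries that preserve μ, and let F ⊆ K be a measurable fundamental domain for the action. Let x ∈ K, r > 0, and let m ≥ 1 be a natural number such that μ(B_r(x)) > m · μ(F), where B_r(x) is the open ball of radius r about x. Then there exists a point q ∈ K and m − 1 pairwise distinct group elements g₂, ..., g_m ∈ G, each different from the identity, such that dist(q, gᵢ • q) ≤ 2r for every i ∈ {2, ..., m}. -/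
open MeasureTheory
open scoped ENNReal Pointwise

/-- **Metric-measure form of the paper's Corollary 1.**
Let `G` be a countable group acting on a metric space `K` by isometries preserving a
Borel measure `μ`, with measurable fundamental domain `F` of finite measure. If
`μ (B_r x) > m * μ F` for some `m ≥ 1`, then there is a point `q` and `m - 1` pairwise
distinct non-identity group elements `g` with `dist q (g • q) ≤ 2r`. -/
theorem metric_blichfeldt_short_elements {K : Type*} [MetricSpace K]
    [MeasurableSpace K] [BorelSpace K]
    {G : Type*} [Group G] [Countable G] [MulAction G K]
    (hiso : ∀ (g : G) (x y : K), dist (g • x) (g • y) = dist x y)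
    (μ : Measure K) [SMulInvariantMeasure G K μ]
    {F : Set K} (hFmeas : MeasurableSet F) (hF : IsFundamentalDomain G F μ)
    (hFfin : μ F < ⊤)
    (x : K) (r : ℝ) (hr : 0 < r) (m : ℕ) (hm : 1 ≤ m)
    (h : (m : ℝ≥0∞) * μ F < μ (Metric.ball x r)) :
    ∃ q : K, ∃ g : Fin (m - 1) → G, Function.Injective g ∧
      ∀ i, g i ≠ 1 ∧ dist q (g i • q) ≤ 2 * r := by
  classical
  set B := Metric.ball x r with hB
  -- each `g • B` is measurable (the action is by isometries, hence continuous)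
  have hcont : ∀ g : G, Continuous (fun y : K => g • y) := fun g =>
    (Isometry.of_dist_eq fun a b => hiso g a b).continuous
  have hBmeas : MeasurableSet B := Metric.isOpen_ball.measurableSet
  have hsmulB : ∀ g : G, MeasurableSet (g • B : Set K) := by
    intro g
    have : (g • B : Set K) = (fun y => g⁻¹ • y) ⁻¹' B := by
      ext y
      simp [Set.mem_smul_set_iff_inv_smul_mem]
    rw [this]
    exact (hcont g⁻¹).measurable hBmeas
  -- the sets whose measures we pigeonhole
  set s : G → Set K := fun g => g • B ∩ F with hs
  have hsBmeas : ∀ g : G, MeasurableSet (s g) := fun g => (hsmulB g).inter hFmeas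
  letI : MeasurableSpace G := ⊤
  haveI : MeasurableConstSMul G K := ⟨fun c => (hcont c).measurable⟩
  haveI : MeasurableSMul G K :=
    ⟨fun _ => measurable_from_top⟩
  have hsum : ∑' g : G, μ (s g) = μ B := (hF.measure_eq_tsum B).symm
  -- the multiplicity function
  set f : K → ℝ≥0∞ := fun p => ∑' g : G, (s g).indicator 1 p with hf
  have hlint : ∫⁻ p, f p ∂μ = μ B := by
    have : ∫⁻ p, f p ∂μ = ∑' g : G, ∫⁻ p, (s g).indicator 1 p ∂μ :=
      lintegral_tsum fun g => ((measurable_one.indicator (hsBmeas g)).aemeasurable)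
    rw [this]
    simp_rw [lintegral_indicator_one (hsBmeas _)]
    exact hsum
  -- there is a point of multiplicity > m
  have hex : ∃ p : K, (m : ℝ≥0∞) < f p := by
    by_contra hcon
    push_neg at hcon
    have hle : ∀ p, f p ≤ F.indicator (fun _ => (m : ℝ≥0∞)) p := by
      intro p
      by_cases hp : p ∈ F
      · simpa [hp] using hcon p
      · have : f p = 0 := by
          refine ENNReal.tsum_eq_zero.2 fun g => ?_
          exact Set.indicator_of_notMem (fun hmem => hp hmem.2) _
        simp [this, hp]
    have : μ B ≤ (m : ℝ≥0∞) * μ F := by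
      calc μ B = ∫⁻ p, f p ∂μ := hlint.symm
        _ ≤ ∫⁻ p, F.indicator (fun _ => (m : ℝ≥0∞)) p ∂μ := lintegral_mono hle
        _ = (m : ℝ≥0∞) * μ F := by rw [lintegral_indicator_const hFmeas]
    exact absurd (h.trans_le this) (lt_irrefl _)
  obtain ⟨p, hp⟩ := hex
  -- the set of group elements hitting p
  set S : Set G := {g : G | p ∈ s g} with hS
  -- extract m distinct elements of S
  have hcard : ∃ t : Finset G, t.card = m ∧ ↑t ⊆ S := by
    by_cases hSfin : S.Finite
    · have hfp : f p = (hSfin.toFinset.card : ℝ≥0∞) := by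
        have h1 : f p = ∑ g ∈ hSfin.toFinset, (s g).indicator 1 p :=
          tsum_eq_sum (fun g hg => Set.indicator_of_notMem (by simpa [hS] using hg) _)
        rw [h1, Finset.sum_congr rfl
          (fun g hg => Set.indicator_of_mem (by simpa [hS] using hg) (1 : K → ℝ≥0∞))]
        simp
      have hlt : (m : ℝ≥0∞) < (hSfin.toFinset.card : ℝ≥0∞) := hfp ▸ hp
      have hmle : m ≤ hSfin.toFinset.card := by exact_mod_cast hlt.le
      obtain ⟨t, hts, htc⟩ := Finset.exists_subset_card_eq hmle
      exact ⟨t, htc, fun g hg => hSfin.mem_toFinset.1 (hts hg)⟩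
    · obtain ⟨t, hts, htc⟩ := Set.Infinite.exists_subset_card_eq hSfin m
      exact ⟨t, htc, hts⟩
  obtain ⟨t, htc, hts⟩ := hcard
  -- enumerate t
  set e : Fin m ≃ t := (t.equivFinOfCardEq htc).symm with he
  have hmem : ∀ i : Fin m, ((e i : G)⁻¹ • p) ∈ B := by
    intro i
    have hmem' : (e i : G) ∈ S := hts (e i).2
    obtain ⟨b, hb, hbe⟩ := hmem'.1
    rw [← hbe, inv_smul_smul]
    exact hb
  set i0 : Fin m := ⟨0, hm⟩ with hi0
  have hinj : ∀ i : Fin (m - 1), ∀ j : Fin (m - 1),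
      (e ⟨i.1 + 1, by omega⟩ : G) = (e ⟨j.1 + 1, by omega⟩ : G) → i = j := by
    intro i j hij
    have h2 : (⟨i.1 + 1, by omega⟩ : Fin m) = ⟨j.1 + 1, by omega⟩ :=
      e.injective (Subtype.coe_injective hij)
    have h3 : i.1 + 1 = j.1 + 1 := congrArg Fin.val h2
    exact Fin.ext (by omega)
  refine ⟨(e i0 : G)⁻¹ • p, fun i => (e ⟨i.1 + 1, by omega⟩ : G)⁻¹ * (e i0 : G), ?_, ?_⟩
  · intro i j hij
    exact hinj i j (inv_injective (mul_right_cancel hij))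
  · intro i
    constructor
    · intro h1
      have h2 : (e ⟨i.1 + 1, by omega⟩ : G) = (e i0 : G) := inv_mul_eq_one.1 h1
      have h3 : (⟨i.1 + 1, by omega⟩ : Fin m) = i0 := e.injective (Subtype.coe_injective h2)
      have h4 : i.1 + 1 = (0 : ℕ) := congrArg Fin.val h3
      omega
    · have hq : ((e ⟨i.1 + 1, by omega⟩ : G)⁻¹ * (e i0 : G)) • ((e i0 : G)⁻¹ • p)
          = (e ⟨i.1 + 1, by omega⟩ : G)⁻¹ • p := by
        rw [smul_smul, mul_assoc, mul_inv_cancel, mul_one]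
      rw [hq]
      calc dist ((e i0 : G)⁻¹ • p) ((e ⟨i.1 + 1, by omega⟩ : G)⁻¹ • p)
          ≤ dist ((e i0 : G)⁻¹ • p) x + dist x ((e ⟨i.1 + 1, by omega⟩ : G)⁻¹ • p) :=
            dist_triangle _ _ _
        _ ≤ r + r := by
            have h1 := hmem i0
            have h2 := hmem ⟨i.1 + 1, by omega⟩
            rw [hB, Metric.mem_ball] at h1 h2
            rw [dist_comm x]
            exact add_le_add h1.le h2.le
        _ = 2 * r := by ring
end

section
/- Let K be a metric space equipped with a Borel measure μ, let G be a countable group acting on K by isometries that preserve μ, and let F ⊆ K be a measurable fundamental domain for the action with 0 < μ(F) < ∞. Fix q ∈ K and suppose there is a constant D > 0 such that for every y ∈ K there exists g ∈ G with dist(g • y, q) ≤ D. Assume moreover that every ball in K has finite μ-measure. For t > 0 let N_q(t) denote the number of group elements g ∈ G with g ≠ 1 and dist(q, g • q) ≤ t, and fix x₀ ∈ K. Then liminf_{t → ∞} log(N_q(t)) / t ≥ (1/2) · liminf_{t → ∞} log(μ(B_t(x₀))) / t. -/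
open MeasureTheory Filter
open scoped ENNReal
open scoped Pointwise

/-- **Half the volume entropy bounds the growth of the orbital counting function
(paper's Section 2 observation).**
Let `G` be a countable group acting on a metric space `K` by isometries preserving a
Borel measure `μ`, with measurable fundamental domain `F`, `0 < μ F < ∞`. Fix `q` and
assume the action is `D`-cocompact (`D > 0`) and every ball has finite measure. With
`N_q(t) = #{g ∈ G | g ≠ 1, dist q (g • q) ≤ t}`, we have
`liminf_{t → ∞} log (N_q t) / t ≥ (1/2) · liminf_{t → ∞} log (μ (B_t x₀)) / t`. -/
theorem orbital_counting_entropy_lower_bound {K : Type*} [MetricSpace K]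
    [MeasurableSpace K] [BorelSpace K]
    {G : Type*} [Group G] [Countable G] [MulAction G K]
    (hiso : ∀ (g : G) (x y : K), dist (g • x) (g • y) = dist x y)
    (μ : Measure K) [SMulInvariantMeasure G K μ]
    {F : Set K} (hFmeas : MeasurableSet F) (hF : IsFundamentalDomain G F μ)
    (hF0 : 0 < μ F) (hFfin : μ F < ⊤)
    (q : K) (D : ℝ) (hD : 0 < D)
    (hdense : ∀ y : K, ∃ g : G, dist (g • y) q ≤ D)
    (hballs : ∀ (x : K) (r : ℝ), μ (Metric.ball x r) < ⊤)
    (x₀ : K) :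
    (1 / 2 : ℝ) *
        liminf (fun t : ℝ => Real.log (μ (Metric.ball x₀ t)).toReal / t) atTop ≤
      liminf (fun t : ℝ =>
        Real.log (({g : G | g ≠ 1 ∧ dist q (g • q) ≤ t}).ncard : ℝ) / t) atTop := by
  classical
  set S : Set K := Metric.closedBall q D with hS_def
  have hSmeas : MeasurableSet S := measurableSet_closedBall
  have hmeas_smul : ∀ g : G, Measurable (fun x : K => g • x) := fun g =>
    (Isometry.of_dist_eq (hiso g)).continuous.measurable
  have hsmul_eq : ∀ (g : G) (E : Set K), g • E = (fun x : K => g⁻¹ • x) ⁻¹' E := by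
    intro g E
    ext x
    simp [Set.mem_smul_set_iff_inv_smul_mem]
  have hmeas_smul_set : ∀ (g : G) (E : Set K), MeasurableSet E → MeasurableSet (g • E) := by
    intro g E hE; rw [hsmul_eq]; exact hmeas_smul g⁻¹ hE
  have hμ_smul : ∀ (g : G) (E : Set K), MeasurableSet E → μ (g • E) = μ E := by
    intro g E hE; rw [hsmul_eq]
    exact SMulInvariantMeasure.measure_preimage_smul g⁻¹ hE
  have hcov : ∀ y : K, ∃ g : G, y ∈ g • S := by
    intro y
    obtain ⟨g, hg⟩ := hdense y
    refine ⟨g⁻¹, ?_⟩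
    rw [Set.mem_smul_set_iff_inv_smul_mem, inv_inv]
    exact Metric.mem_closedBall.2 hg
  obtain ⟨g₀, hg₀⟩ : ∃ g₀ : G, 0 < μ (F ∩ g₀ • S) := by
    by_contra h
    push_neg at h
    have h' : ∀ g : G, μ (F ∩ g • S) = 0 := fun g => le_antisymm (h g) zero_le
    have hFeq : F = ⋃ g : G, F ∩ g • S := by
      ext x
      simp only [Set.mem_iUnion, Set.mem_inter_iff]
      constructor
      · intro hx
        obtain ⟨g, hg⟩ := hcov x
        exact ⟨g, hx, hg⟩
      · rintro ⟨g, hx, -⟩; exact hx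
    have : μ F = 0 := by
      rw [hFeq]
      refine le_antisymm ((measure_iUnion_le _).trans ?_) zero_le
      simp [h']
    exact absurd this hF0.ne'
  set F₀ : Set K := F ∩ g₀ • S with hF₀_def
  have hF₀meas : MeasurableSet F₀ := hFmeas.inter (hmeas_smul_set _ _ hSmeas)
  set ε : ℝ≥0∞ := μ F₀ with hε_def
  have hε0 : 0 < ε := hg₀
  have hεfin : ε < ⊤ := lt_of_le_of_lt (measure_mono Set.inter_subset_left) hFfin
  have hF₀loc : ∀ x ∈ F₀, dist x (g₀ • q) ≤ D := by
    intro x hx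
    have hx2 : g₀⁻¹ • x ∈ S := Set.mem_smul_set_iff_inv_smul_mem.1 hx.2
    have hxe : dist x (g₀ • q) = dist (g₀⁻¹ • x) q := by
      rw [← hiso g₀⁻¹, inv_smul_smul]
    rw [hxe]
    exact Metric.mem_closedBall.1 hx2
  set A : ℝ → Set G := fun s => {g : G | dist q (g • q) ≤ s} with hA_def
  set c₀ : ℝ := dist q (g₀ • q) with hc₀_def
  set R₀ : ℝ := c₀ + D + 1 with hR₀_def
  have hpackF : ∀ (s : ℝ) (T : Finset G), ↑T ⊆ A s →
      (T.card : ℝ≥0∞) * ε ≤ μ (Metric.ball q (s + R₀)) := by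
    intro s T hT
    have hsub : ∀ g ∈ T, g • F₀ ⊆ Metric.ball q (s + R₀) := by
      intro g hg x hx
      obtain ⟨y, hy, rfl⟩ := hx
      have ht := dist_triangle4 (g • y) (g • (g₀ • q)) (g • q) q
      rw [hiso, hiso] at ht
      have hb : dist y (g₀ • q) ≤ D := hF₀loc y hy
      have hcq : dist (g₀ • q) q = c₀ := by rw [hc₀_def, dist_comm]
      have hd' : dist (g • q) q ≤ s := by
        rw [dist_comm]; exact hT hg
      refine Metric.mem_ball.2 ?_
      rw [hcq] at ht
      have : (0:ℝ) < 1 := one_pos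
      rw [hR₀_def]
      linarith
    have hdisj : (↑T : Set G).Pairwise (Function.onFun (AEDisjoint μ) fun g : G => g • F₀) := by
      intro g _ h _ hgh
      exact (hF.aedisjoint hgh).mono (Set.smul_set_mono Set.inter_subset_left)
        (Set.smul_set_mono Set.inter_subset_left)
    have hmeasb : ∀ g ∈ T, NullMeasurableSet (g • F₀) μ :=
      fun g _ => (hmeas_smul_set g F₀ hF₀meas).nullMeasurableSet
    calc (T.card : ℝ≥0∞) * ε = ∑ g ∈ T, μ (g • F₀) := by
          rw [Finset.sum_congr rfl fun g _ => hμ_smul g F₀ hF₀meas]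
          simp [Finset.sum_const, nsmul_eq_mul, hε_def]
      _ = μ (⋃ g ∈ T, g • F₀) := (measure_biUnion_finset₀ hdisj hmeasb).symm
      _ ≤ μ (Metric.ball q (s + R₀)) := measure_mono (Set.iUnion₂_subset hsub)
  have hAfin : ∀ s : ℝ, (A s).Finite := by
    intro s
    by_contra hinf
    obtain ⟨n, hn⟩ := ENNReal.exists_nat_gt
      (show μ (Metric.ball q (s + R₀)) / ε ≠ ⊤ from
        (ENNReal.div_lt_top (hballs q _).ne hε0.ne').ne)
    obtain ⟨T, hTsub, hTcard⟩ := Set.Infinite.exists_subset_card_eq hinf n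
    have hle := hpackF s T hTsub
    rw [hTcard] at hle
    have h2 : μ (Metric.ball q (s + R₀)) < (n : ℝ≥0∞) * ε := by
      rwa [ENNReal.div_lt_iff (Or.inl hε0.ne') (Or.inl hεfin.ne)] at hn
    exact absurd hle (not_le.2 h2)
  have hpack : ∀ s : ℝ, ((A s).ncard : ℝ≥0∞) * ε ≤ μ (Metric.ball q (s + R₀)) := by
    intro s
    have hT := hpackF s (hAfin s).toFinset (by simp)
    rwa [Set.ncard_eq_toFinset_card _ (hAfin s)]
  set c : ℝ := dist x₀ q + D with hc_def
  have hc_nonneg : 0 ≤ c := by rw [hc_def]; positivity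
  have hcover : ∀ t : ℝ, μ (Metric.ball x₀ t) ≤ ((A (t + c)).ncard : ℝ≥0∞) * μ S := by
    intro t
    have hsub : Metric.ball x₀ t ⊆ ⋃ g ∈ (hAfin (t + c)).toFinset, g • S := by
      intro x hx
      obtain ⟨g, hg⟩ := hdense x
      have hmem : x ∈ g⁻¹ • S := by
        rw [Set.mem_smul_set_iff_inv_smul_mem, inv_inv]
        exact Metric.mem_closedBall.2 hg
      have hA' : g⁻¹ ∈ A (t + c) := by
        show dist q (g⁻¹ • q) ≤ t + c
        have h1 : dist q (g⁻¹ • q) = dist (g • q) q := by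
          rw [← hiso g q (g⁻¹ • q), smul_inv_smul]
        have h2 : dist (g • q) q ≤ dist (g • q) (g • x) + dist (g • x) q := dist_triangle _ _ _
        rw [hiso] at h2
        have h3 : dist q x ≤ dist q x₀ + dist x₀ x := dist_triangle _ _ _
        have h4 : dist x₀ x < t := Metric.mem_ball'.1 hx
        have h5 : dist q x₀ = dist x₀ q := dist_comm _ _
        rw [h1, hc_def]
        linarith
      simp only [Set.mem_iUnion]
      exact ⟨g⁻¹, by simpa using hA', hmem⟩
    calc μ (Metric.ball x₀ t) ≤ ∑ g ∈ (hAfin (t + c)).toFinset, μ (g • S) :=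
          le_trans (measure_mono hsub) (measure_biUnion_finset_le _ _)
      _ = ((A (t + c)).ncard : ℝ≥0∞) * μ S := by
          rw [Finset.sum_congr rfl fun g _ => hμ_smul g S hSmeas, Finset.sum_const,
            Set.ncard_eq_toFinset_card _ (hAfin _)]
          simp [nsmul_eq_mul]
  have hμS_pos : 0 < μ S := by
    have h1 : 0 < μ (g₀ • S) := lt_of_lt_of_le hg₀ (measure_mono Set.inter_subset_right)
    rwa [hμ_smul g₀ S hSmeas] at h1
  have hμS_fin : μ S < ⊤ :=
    lt_of_le_of_lt (measure_mono (Metric.closedBall_subset_ball (by linarith)))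
      (hballs q (D + 1))
  set μSr : ℝ := (μ S).toReal with hμSr_def
  have hμSr_pos : 0 < μSr := ENNReal.toReal_pos hμS_pos.ne' hμS_fin.ne
  set εr : ℝ := ε.toReal with hεr_def
  have hεr_pos : 0 < εr := ENNReal.toReal_pos hε0.ne' hεfin.ne
  have hcoverR : ∀ t : ℝ, (μ (Metric.ball x₀ t)).toReal ≤ ((A (t + c)).ncard : ℝ) * μSr := by
    intro t
    have h2 := ENNReal.toReal_mono (ENNReal.mul_ne_top (ENNReal.natCast_ne_top _) hμS_fin.ne)
      (hcover t)
    simpa [ENNReal.toReal_mul] using h2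
  set R₁ : ℝ := R₀ + dist q x₀ with hR₁_def
  have hR₁_nonneg : 0 ≤ R₁ := by
    rw [hR₁_def, hR₀_def, hc₀_def]
    positivity
  have hpackR : ∀ s : ℝ, ((A s).ncard : ℝ) * εr ≤ (μ (Metric.ball x₀ (s + R₁))).toReal := by
    intro s
    have h1 : μ (Metric.ball q (s + R₀)) ≤ μ (Metric.ball x₀ (s + R₁)) := by
      apply measure_mono
      intro y hy
      rw [Metric.mem_ball] at hy ⊢
      have h2 := dist_triangle y q x₀
      rw [hR₁_def]
      linarith
    have h3 := le_trans (hpack s) h1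
    have h2 := ENNReal.toReal_mono (hballs x₀ _).ne h3
    simpa [ENNReal.toReal_mul] using h2
  have hNsubA : ∀ t : ℝ, {g : G | g ≠ 1 ∧ dist q (g • q) ≤ t} ⊆ A t := fun t g hg => hg.2
  have hNfin : ∀ t : ℝ, ({g : G | g ≠ 1 ∧ dist q (g • q) ≤ t}).Finite :=
    fun t => (hAfin t).subset (hNsubA t)
  have hAcard_le : ∀ t : ℝ, (A t).ncard ≤ ({g : G | g ≠ 1 ∧ dist q (g • q) ≤ t}).ncard + 1 := by
    intro t
    have hsub : A t ⊆ insert (1 : G) {g : G | g ≠ 1 ∧ dist q (g • q) ≤ t} := by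
      intro g hg
      by_cases h1 : g = 1
      · simp [h1]
      · exact Set.mem_insert_iff.2 (Or.inr ⟨h1, hg⟩)
    exact (Set.ncard_le_ncard hsub ((hNfin t).insert 1)).trans (Set.ncard_insert_le _ _)
  have main : (1 / 2 : ℝ) *
      sSup {a : ℝ | ∀ᶠ t in atTop, a ≤ Real.log (μ (Metric.ball x₀ t)).toReal / t} ≤
      sSup {a : ℝ | ∀ᶠ t in atTop,
        a ≤ Real.log (({g : G | g ≠ 1 ∧ dist q (g • q) ≤ t}).ncard : ℝ) / t} := by
    by_cases hG : ∃ g₁ : G, g₁ ≠ 1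
    · obtain ⟨g₁, hg₁⟩ := hG
      have hN1 : ∀ t : ℝ, dist q (g₁ • q) ≤ t →
          1 ≤ ({g : G | g ≠ 1 ∧ dist q (g • q) ≤ t}).ncard := by
        intro t ht
        exact (Set.ncard_pos (hNfin t)).2 ⟨g₁, ⟨hg₁, ht⟩⟩
      have h0Sg : (0 : ℝ) ∈ {a : ℝ | ∀ᶠ t in atTop,
          a ≤ Real.log (({g : G | g ≠ 1 ∧ dist q (g • q) ≤ t}).ncard : ℝ) / t} := by
        simp only [Set.mem_setOf_eq]
        filter_upwards [eventually_ge_atTop (max (dist q (g₁ • q)) 1)] with s hs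
        have hs1 : (1 : ℝ) ≤ s := le_trans (le_max_right _ _) hs
        have hn := hN1 s (le_trans (le_max_left _ _) hs)
        have hn' : (1 : ℝ) ≤ (({g : G | g ≠ 1 ∧ dist q (g • q) ≤ s}).ncard : ℝ) := by
          exact_mod_cast hn
        exact div_nonneg (Real.log_nonneg hn') (by linarith)
      have hkey1 : ∀ a : ℝ, 0 < a →
          (∀ᶠ t in atTop, a ≤ Real.log (μ (Metric.ball x₀ t)).toReal / t) →
          (∀ᶠ s in atTop,
            a / 2 ≤ Real.log (({g : G | g ≠ 1 ∧ dist q (g • q) ≤ s}).ncard : ℝ) / s) := by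
        intro a ha hev
        obtain ⟨T₀, hT₀⟩ := eventually_atTop.1 hev
        set C₁ : ℝ := Real.log 2 + Real.log μSr with hC₁_def
        set Kc : ℝ := a * c + C₁ with hKc_def
        filter_upwards [eventually_ge_atTop
          (max (max (T₀ + c) (max (dist q (g₁ • q)) (1 + c))) (2 * |Kc| / a + 1))] with s hs
        have hs1 : T₀ + c ≤ s := le_trans (le_trans (le_max_left _ _) (le_max_left _ _)) hs
        have hs2 : dist q (g₁ • q) ≤ s :=
          le_trans (le_trans (le_max_left _ _) (le_trans (le_max_right _ _) (le_max_left _ _))) hs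
        have hs3 : 1 + c ≤ s :=
          le_trans (le_trans (le_max_right _ _) (le_trans (le_max_right _ _) (le_max_left _ _))) hs
        have hs4 : 2 * |Kc| / a + 1 ≤ s := le_trans (le_max_right _ _) hs
        have ht1 : (1 : ℝ) ≤ s - c := by linarith
        have hspos : (0 : ℝ) < s := by linarith
        have haf := hT₀ (s - c) (by linarith)
        have h_at : a * (s - c) ≤ Real.log (μ (Metric.ball x₀ (s - c))).toReal :=
          (le_div_iff₀ (by linarith : (0 : ℝ) < s - c)).1 haf
        have hlogpos : 0 < Real.log (μ (Metric.ball x₀ (s - c))).toReal :=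
          lt_of_lt_of_le (mul_pos ha (by linarith)) h_at
        have hμpos : 0 < (μ (Metric.ball x₀ (s - c))).toReal := by
          by_contra hcon
          push_neg at hcon
          have h0 : (μ (Metric.ball x₀ (s - c))).toReal = 0 :=
            le_antisymm hcon ENNReal.toReal_nonneg
          rw [h0, Real.log_zero] at hlogpos
          exact lt_irrefl _ hlogpos
        have hcov' := hcoverR (s - c)
        rw [sub_add_cancel] at hcov'
        have hNc1 := hN1 s hs2
        have hA_le : ((A s).ncard : ℝ) ≤
            2 * (({g : G | g ≠ 1 ∧ dist q (g • q) ≤ s}).ncard : ℝ) := by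
          have h6 := hAcard_le s
          have h7 : (A s).ncard ≤ 2 * ({g : G | g ≠ 1 ∧ dist q (g • q) ≤ s}).ncard := by omega
          exact_mod_cast h7
        have hNpos : (0 : ℝ) < (({g : G | g ≠ 1 ∧ dist q (g • q) ≤ s}).ncard : ℝ) := by
          exact_mod_cast hNc1
        have hlog1 : Real.log (μ (Metric.ball x₀ (s - c))).toReal ≤
            Real.log (2 * (({g : G | g ≠ 1 ∧ dist q (g • q) ≤ s}).ncard : ℝ) * μSr) := by
          apply Real.log_le_log hμpos
          exact hcov'.trans (mul_le_mul_of_nonneg_right hA_le hμSr_pos.le)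
        have hlog2 : Real.log (2 * (({g : G | g ≠ 1 ∧ dist q (g • q) ≤ s}).ncard : ℝ) * μSr) =
            Real.log 2 + Real.log (({g : G | g ≠ 1 ∧ dist q (g • q) ≤ s}).ncard : ℝ) +
              Real.log μSr := by
          rw [Real.log_mul (by positivity) hμSr_pos.ne', Real.log_mul two_ne_zero hNpos.ne']
        have hlogN : a * s - Kc ≤
            Real.log (({g : G | g ≠ 1 ∧ dist q (g • q) ≤ s}).ncard : ℝ) := by
          have h8 := h_at.trans (hlog1.trans_eq hlog2)
          have h9 : a * (s - c) = a * s - a * c := by ring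
          rw [hKc_def, hC₁_def]
          linarith
        rw [le_div_iff₀ hspos]
        have h10 : 2 * |Kc| ≤ a * (s - 1) := by
          have h10' := (div_le_iff₀ ha).1 (by linarith : 2 * |Kc| / a ≤ s - 1)
          linarith
        have h11 : a * (s - 1) = a * s - a := by ring
        have h12 : Kc ≤ |Kc| := le_abs_self Kc
        linarith
      have hkey2 : ∀ a : ℝ, 1 ≤ a →
          (∀ᶠ s in atTop,
            a ≤ Real.log (({g : G | g ≠ 1 ∧ dist q (g • q) ≤ s}).ncard : ℝ) / s) →
          (∀ᶠ t in atTop, a / 2 ≤ Real.log (μ (Metric.ball x₀ t)).toReal / t) := by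
        intro a ha hev
        have ha0 : (0 : ℝ) < a := by linarith
        obtain ⟨T₀, hT₀⟩ := eventually_atTop.1 hev
        set Kc : ℝ := a * R₁ - Real.log εr with hKc_def
        filter_upwards [eventually_ge_atTop
          (max (max (T₀ + R₁) (1 + R₁)) (2 * |Kc| / a + 1))] with t hts
        have hs1 : T₀ + R₁ ≤ t := le_trans (le_trans (le_max_left _ _) (le_max_left _ _)) hts
        have hs2 : 1 + R₁ ≤ t := le_trans (le_trans (le_max_right _ _) (le_max_left _ _)) hts
        have hs4 : 2 * |Kc| / a + 1 ≤ t := le_trans (le_max_right _ _) hts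
        have hspos : (0 : ℝ) < t - R₁ := by linarith
        have htpos : (0 : ℝ) < t := by linarith
        have hgs := hT₀ (t - R₁) (by linarith)
        have h_as : a * (t - R₁) ≤
            Real.log (({g : G | g ≠ 1 ∧ dist q (g • q) ≤ t - R₁}).ncard : ℝ) :=
          (le_div_iff₀ hspos).1 hgs
        have hlogpos : 0 <
            Real.log (({g : G | g ≠ 1 ∧ dist q (g • q) ≤ t - R₁}).ncard : ℝ) :=
          lt_of_lt_of_le (mul_pos ha0 hspos) h_as
        have hNc1 : 1 ≤ ({g : G | g ≠ 1 ∧ dist q (g • q) ≤ t - R₁}).ncard := by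
          by_contra hcon
          push_neg at hcon
          have h0 : ({g : G | g ≠ 1 ∧ dist q (g • q) ≤ t - R₁}).ncard = 0 := by omega
          rw [h0] at hlogpos
          simp at hlogpos
        have hNpos : (0 : ℝ) <
            (({g : G | g ≠ 1 ∧ dist q (g • q) ≤ t - R₁}).ncard : ℝ) := by
          exact_mod_cast hNc1
        have hAge : ((({g : G | g ≠ 1 ∧ dist q (g • q) ≤ t - R₁}).ncard : ℕ) : ℝ) ≤
            ((A (t - R₁)).ncard : ℝ) := by
          exact_mod_cast Set.ncard_le_ncard (hNsubA (t - R₁)) (hAfin (t - R₁))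
        have hp := hpackR (t - R₁)
        rw [sub_add_cancel] at hp
        have hchain : (({g : G | g ≠ 1 ∧ dist q (g • q) ≤ t - R₁}).ncard : ℝ) * εr ≤
            (μ (Metric.ball x₀ t)).toReal :=
          le_trans (mul_le_mul_of_nonneg_right hAge hεr_pos.le) hp
        have hμpos : 0 < (μ (Metric.ball x₀ t)).toReal :=
          lt_of_lt_of_le (by positivity) hchain
        have hlog : Real.log (({g : G | g ≠ 1 ∧ dist q (g • q) ≤ t - R₁}).ncard : ℝ) +
            Real.log εr ≤ Real.log (μ (Metric.ball x₀ t)).toReal := by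
          rw [← Real.log_mul hNpos.ne' hεr_pos.ne']
          exact Real.log_le_log (by positivity) hchain
        rw [le_div_iff₀ htpos]
        have h10 : 2 * |Kc| ≤ a * (t - 1) := by
          have h10' := (div_le_iff₀ ha0).1 (by linarith : 2 * |Kc| / a ≤ t - 1)
          linarith
        have h11 : a * (t - 1) = a * t - a := by ring
        have h12 : Kc ≤ |Kc| := le_abs_self Kc
        have h13 : a * (t - R₁) = a * t - a * R₁ := by ring
        have h14 : Kc = a * R₁ - Real.log εr := hKc_def
        linarith
      by_cases hB : BddAbove {a : ℝ | ∀ᶠ t in atTop,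
          a ≤ Real.log (({g : G | g ≠ 1 ∧ dist q (g • q) ≤ t}).ncard : ℝ) / t}
      · have h0 : (0 : ℝ) ≤ sSup {a : ℝ | ∀ᶠ t in atTop,
            a ≤ Real.log (({g : G | g ≠ 1 ∧ dist q (g • q) ≤ t}).ncard : ℝ) / t} :=
          le_csSup hB h0Sg
        have hbound : ∀ b ∈ {a : ℝ | ∀ᶠ t in atTop,
            a ≤ Real.log (μ (Metric.ball x₀ t)).toReal / t},
            b ≤ 2 * sSup {a : ℝ | ∀ᶠ t in atTop,
              a ≤ Real.log (({g : G | g ≠ 1 ∧ dist q (g • q) ≤ t}).ncard : ℝ) / t} := by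
          intro b hb
          rcases le_or_gt b 0 with h | h
          · linarith
          · have hmem := le_csSup hB (hkey1 b h hb)
            linarith
        have hle := Real.sSup_le hbound (by linarith)
        linarith
      · have hSf : ¬BddAbove {a : ℝ | ∀ᶠ t in atTop,
            a ≤ Real.log (μ (Metric.ball x₀ t)).toReal / t} := by
          rintro ⟨M, hM⟩
          obtain ⟨b, hbSg, hbM⟩ := not_bddAbove_iff.1 hB (max (2 * M) 1)
          have hb1 : (1 : ℝ) ≤ b := (lt_of_le_of_lt (le_max_right _ _) hbM).le
          have h1 := hM (hkey2 b hb1 hbSg)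
          have h2 : 2 * M < b := lt_of_le_of_lt (le_max_left _ _) hbM
          linarith
        rw [Real.sSup_of_not_bddAbove hB, Real.sSup_of_not_bddAbove hSf]
        norm_num
    · push_neg at hG
      have hNSempty : ∀ t : ℝ, {g : G | g ≠ 1 ∧ dist q (g • q) ≤ t} = ∅ := by
        intro t
        ext g
        simp [hG g]
      have hRHS : {a : ℝ | ∀ᶠ t in atTop,
          a ≤ Real.log (({g : G | g ≠ 1 ∧ dist q (g • q) ≤ t}).ncard : ℝ) / t} = Set.Iic 0 := by
        ext a
        simp only [Set.mem_setOf_eq, hNSempty, Set.ncard_empty, Nat.cast_zero, Real.log_zero,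
          zero_div, Set.mem_Iic]
        exact eventually_const
      rw [hRHS, csSup_Iic]
      have hA1 : ∀ t : ℝ, ((A (t + c)).ncard : ℝ) ≤ 1 := by
        intro t
        have hsub : A (t + c) ⊆ {(1 : G)} := fun g _ => hG g
        have hle := (Set.ncard_le_ncard hsub (Set.finite_singleton 1)).trans_eq
          (Set.ncard_singleton 1)
        exact_mod_cast hle
      have hSfle : sSup {a : ℝ | ∀ᶠ t in atTop,
          a ≤ Real.log (μ (Metric.ball x₀ t)).toReal / t} ≤ 0 := by
        apply Real.sSup_le _ le_rfl
        intro b hb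
        simp only [Set.mem_setOf_eq] at hb
        have hC0 : (0 : ℝ) ≤ max (Real.log μSr) 0 := le_max_right _ _
        have htend : Tendsto (fun t : ℝ => max (Real.log μSr) 0 / t) atTop (nhds 0) :=
          Filter.Tendsto.div_atTop tendsto_const_nhds tendsto_id
        refine ge_of_tendsto htend ?_
        filter_upwards [hb, eventually_ge_atTop 1] with t h1 h2
        refine h1.trans ?_
        have h3 : Real.log (μ (Metric.ball x₀ t)).toReal ≤ max (Real.log μSr) 0 := by
          rcases eq_or_lt_of_le (ENNReal.toReal_nonneg :
              (0 : ℝ) ≤ (μ (Metric.ball x₀ t)).toReal) with h | h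
          · rw [← h, Real.log_zero]
            exact le_max_right _ _
          · refine le_trans (Real.log_le_log h ?_) (le_max_left _ _)
            calc (μ (Metric.ball x₀ t)).toReal ≤ ((A (t + c)).ncard : ℝ) * μSr := hcoverR t
              _ ≤ 1 * μSr := mul_le_mul_of_nonneg_right (hA1 t) hμSr_pos.le
              _ = μSr := one_mul _
        gcongr
      linarith
  rw [Filter.liminf_eq, Filter.liminf_eq]
  exact main
end
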